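/- Let H be a real Hilbert space, t₀ ≤ t₁ real numbers, b, u : [t₀, t₁] → H continuously differentiable, and ε > 0. Then ∫_{t₀}^{t₁} ⟨b(s), u'(s)⟩ ds ≤ (1/(4ε)) sup_{s ∈ [t₀,t₁]} ‖u(s)‖² + 8ε ‖b(t₀)‖² + 8ε (t₁ − t₀) ∫_{t₀}^{t₁} ‖b'(s)‖² ds. -/
import Mathlib


open RealInnerProductSpace

/-- The bound on the load term `T₁ = ∫ ⟨b, ∂ₜu⟩` in the stability proof: for continuously
differentiable Hilbert-space-valued `b, u` and every `ε > 0`,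
`∫_{t₀}^{t₁} ⟨b, u'⟩ ≤ (1/(4ε)) sup_{[t₀,t₁]} ‖u‖² + 8ε ‖b(t₀)‖² + 8ε (t₁−t₀) ∫_{t₀}^{t₁} ‖b'‖²`. -/
theorem load_term_young_estimate
    {H : Type*} [NormedAddCommGroup H] [InnerProductSpace ℝ H] [CompleteSpace H]
    (t₀ t₁ : ℝ) (h01 : t₀ ≤ t₁) (b b' u u' : ℝ → H)
    (hb : ∀ s ∈ Set.Icc t₀ t₁, HasDerivAt b (b' s) s)
    (hb' : ContinuousOn b' (Set.Icc t₀ t₁))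
    (hu : ∀ s ∈ Set.Icc t₀ t₁, HasDerivAt u (u' s) s)
    (hu' : ContinuousOn u' (Set.Icc t₀ t₁))
    (ε : ℝ) (hε : 0 < ε) :
    ∫ s in t₀..t₁, ⟪b s, u' s⟫ ≤
      (1 / (4 * ε)) * (⨆ s : Set.Icc t₀ t₁, ‖u (s : ℝ)‖ ^ 2) +
        8 * ε * ‖b t₀‖ ^ 2 + 8 * ε * (t₁ - t₀) * ∫ s in t₀..t₁, ‖b' s‖ ^ 2 := by
  set M : ℝ := ⨆ s : Set.Icc t₀ t₁, ‖u (s : ℝ)‖ ^ 2 with hMdef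
  have hM0 : 0 ≤ M := Real.iSup_nonneg fun s => sq_nonneg _
  -- continuity of b, u on Icc
  have hbc : ContinuousOn b (Set.Icc t₀ t₁) :=
    fun s hs => (hb s hs).continuousAt.continuousWithinAt
  have huc : ContinuousOn u (Set.Icc t₀ t₁) :=
    fun s hs => (hu s hs).continuousAt.continuousWithinAt
  -- trivial case t₀ = t₁
  rcases eq_or_lt_of_le h01 with heq | hlt
  · subst heq
    rw [intervalIntegral.integral_same]
    have h1 : 0 ≤ (1 / (4 * ε)) * M := by positivity
    have h2 : 0 ≤ 8 * ε * ‖b t₀‖ ^ 2 := by positivity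
    simp only [sub_self, intervalIntegral.integral_same, mul_zero]
    linarith
  set L : ℝ := t₁ - t₀ with hLdef
  have hL : 0 < L := by simp [hLdef]; linarith
  -- sup bound
  have hbdd : BddAbove (Set.range fun s : Set.Icc t₀ t₁ => ‖u (s : ℝ)‖ ^ 2) := by
    have : (Set.range fun s : Set.Icc t₀ t₁ => ‖u (s : ℝ)‖ ^ 2) =
        (fun s => ‖u s‖ ^ 2) '' Set.Icc t₀ t₁ := by
      ext x
      simp [Set.mem_image, Set.range, Subtype.exists, eq_comm]
    rw [this]
    exact (isCompact_Icc.image_of_continuousOn ((huc.norm).pow 2)).bddAbove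
  have hMle : ∀ s ∈ Set.Icc t₀ t₁, ‖u s‖ ^ 2 ≤ M := fun s hs =>
    le_ciSup hbdd (⟨s, hs⟩ : Set.Icc t₀ t₁)
  set m : ℝ := Real.sqrt M with hmdef
  have hm0 : 0 ≤ m := Real.sqrt_nonneg M
  have hm2 : m ^ 2 = M := Real.sq_sqrt hM0
  have hum : ∀ s ∈ Set.Icc t₀ t₁, ‖u s‖ ≤ m := by
    intro s hs
    have h1 := hMle s hs
    nlinarith [norm_nonneg (u s)]
  -- integrability facts
  have hIb' : IntervalIntegrable b' MeasureTheory.volume t₀ t₁ :=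
    (hb'.mono (by rw [Set.uIcc_of_le h01])).intervalIntegrable
  have hIbn : IntervalIntegrable (fun s => ‖b' s‖) MeasureTheory.volume t₀ t₁ :=
    ((hb'.norm).mono (by rw [Set.uIcc_of_le h01])).intervalIntegrable
  have hIbn2 : IntervalIntegrable (fun s => ‖b' s‖ ^ 2) MeasureTheory.volume t₀ t₁ :=
    (((hb'.norm).pow 2).mono (by rw [Set.uIcc_of_le h01])).intervalIntegrable
  have hIinner : IntervalIntegrable (fun s => ⟪b' s, u s⟫) MeasureTheory.volume t₀ t₁ :=
    ((hb'.inner huc).mono (by rw [Set.uIcc_of_le h01])).intervalIntegrable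
  have hIinner2 : IntervalIntegrable (fun s => ⟪b s, u' s⟫) MeasureTheory.volume t₀ t₁ :=
    ((hbc.inner hu').mono (by rw [Set.uIcc_of_le h01])).intervalIntegrable
  set I₁ : ℝ := ∫ s in t₀..t₁, ‖b' s‖ with hI1def
  set I₂ : ℝ := ∫ s in t₀..t₁, ‖b' s‖ ^ 2 with hI2def
  -- integration by parts
  have hibp : (∫ s in t₀..t₁, ⟪b s, u' s⟫) =
      (⟪b t₁, u t₁⟫ - ⟪b t₀, u t₀⟫) - ∫ s in t₀..t₁, ⟪b' s, u s⟫ := by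
    have hsum : (∫ s in t₀..t₁, (⟪b s, u' s⟫ + ⟪b' s, u s⟫)) =
        ⟪b t₁, u t₁⟫ - ⟪b t₀, u t₀⟫ := by
      apply intervalIntegral.integral_eq_sub_of_hasDerivAt
      · intro s hs
        rw [Set.uIcc_of_le h01] at hs
        exact (hb s hs).inner ℝ (hu s hs)
      · exact hIinner2.add hIinner
    rw [intervalIntegral.integral_add hIinner2 hIinner] at hsum
    linarith
  -- FTC for b
  have hftc : (∫ s in t₀..t₁, b' s) = b t₁ - b t₀ := by
    apply intervalIntegral.integral_eq_sub_of_hasDerivAt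
    · intro s hs
      rw [Set.uIcc_of_le h01] at hs
      exact hb s hs
    · exact hIb'
  have hI10 : 0 ≤ I₁ :=
    intervalIntegral.integral_nonneg h01 fun s _ => norm_nonneg _
  have hbdiff : ‖b t₁ - b t₀‖ ≤ I₁ := by
    rw [← hftc]
    exact intervalIntegral.norm_integral_le_integral_norm h01
  -- bound for -∫⟪b',u⟫
  have hmid : -(∫ s in t₀..t₁, ⟪b' s, u s⟫) ≤ m * I₁ := by
    have h1 : ‖∫ s in t₀..t₁, ⟪b' s, u s⟫‖ ≤ ∫ s in t₀..t₁, ‖⟪b' s, u s⟫‖ :=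
      intervalIntegral.norm_integral_le_integral_norm h01
    have h2 : (∫ s in t₀..t₁, ‖⟪b' s, u s⟫‖) ≤ ∫ s in t₀..t₁, m * ‖b' s‖ := by
      apply intervalIntegral.integral_mono_on h01 _ (hIbn.const_mul m)
      · intro s hs
        calc ‖⟪b' s, u s⟫‖ ≤ ‖b' s‖ * ‖u s‖ := norm_inner_le_norm _ _
          _ ≤ ‖b' s‖ * m := by
              exact mul_le_mul_of_nonneg_left (hum s hs) (norm_nonneg _)
          _ = m * ‖b' s‖ := mul_comm _ _
      · exact ((hb'.inner huc).norm.mono (by rw [Set.uIcc_of_le h01])).intervalIntegrable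
    rw [intervalIntegral.integral_const_mul] at h2
    have h4 : |∫ s in t₀..t₁, ⟪b' s, u s⟫| ≤ m * I₁ := by
      rw [← Real.norm_eq_abs]; exact h1.trans h2
    linarith [neg_le_abs (∫ s in t₀..t₁, ⟪b' s, u s⟫)]
  -- Young inequality at the integral level: 2 m I₁ ≤ m²/(8εL) · L + 8εL I₂
  have hyoung : 2 * m * I₁ ≤ m ^ 2 / (8 * ε) + 8 * ε * L * I₂ := by
    have hpt : ∀ s ∈ Set.Icc t₀ t₁,
        2 * m * ‖b' s‖ ≤ m ^ 2 / (8 * ε * L) + 8 * ε * L * ‖b' s‖ ^ 2 := by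
      intro s _
      have h8 : 0 < 8 * ε * L := by positivity
      have hid : m ^ 2 / (8 * ε * L) + 8 * ε * L * ‖b' s‖ ^ 2 - 2 * m * ‖b' s‖ =
          (m - 8 * ε * L * ‖b' s‖) ^ 2 / (8 * ε * L) := by
        field_simp; ring
      nlinarith [div_nonneg (sq_nonneg (m - 8 * ε * L * ‖b' s‖)) h8.le]
    have hmono : (∫ s in t₀..t₁, 2 * m * ‖b' s‖) ≤
        ∫ s in t₀..t₁, (m ^ 2 / (8 * ε * L) + 8 * ε * L * ‖b' s‖ ^ 2) :=
      intervalIntegral.integral_mono_on h01 (hIbn.const_mul _)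
        ((intervalIntegrable_const).add (hIbn2.const_mul _)) hpt
    rw [intervalIntegral.integral_const_mul] at hmono
    rw [intervalIntegral.integral_add intervalIntegrable_const (hIbn2.const_mul _),
      intervalIntegral.integral_const, intervalIntegral.integral_const_mul] at hmono
    have hcalc : (t₁ - t₀) • (m ^ 2 / (8 * ε * L)) = m ^ 2 / (8 * ε) := by
      rw [smul_eq_mul]
      field_simp [hLdef]
      ring
    rw [hcalc] at hmono
    linarith
  -- endpoint bounds
  have hend1 : ⟪b t₀, u t₁ - u t₀⟫ ≤ ‖b t₀‖ * (2 * m) := by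
    calc ⟪b t₀, u t₁ - u t₀⟫ ≤ ‖b t₀‖ * ‖u t₁ - u t₀‖ := real_inner_le_norm _ _
      _ ≤ ‖b t₀‖ * (2 * m) := by
          apply mul_le_mul_of_nonneg_left _ (norm_nonneg _)
          have h1 := hum t₀ ⟨le_refl _, h01⟩
          have h2 := hum t₁ ⟨h01, le_refl _⟩
          calc ‖u t₁ - u t₀‖ ≤ ‖u t₁‖ + ‖u t₀‖ := norm_sub_le _ _
            _ ≤ 2 * m := by linarith
  have hend2 : ⟪b t₁ - b t₀, u t₁⟫ ≤ I₁ * m := by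
    calc ⟪b t₁ - b t₀, u t₁⟫ ≤ ‖b t₁ - b t₀‖ * ‖u t₁‖ := real_inner_le_norm _ _
      _ ≤ I₁ * m := mul_le_mul hbdiff (hum t₁ ⟨h01, le_refl _⟩) (norm_nonneg _) hI10
  have hsplit : ⟪b t₁, u t₁⟫ - ⟪b t₀, u t₀⟫ =
      ⟪b t₀, u t₁ - u t₀⟫ + ⟪b t₁ - b t₀, u t₁⟫ := by
    simp only [inner_sub_left, inner_sub_right]
    ring
  -- Young for the b t₀ term
  have hyoung2 : 2 * m * ‖b t₀‖ ≤ m ^ 2 / (8 * ε) + 8 * ε * ‖b t₀‖ ^ 2 := by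
    have h8 : 0 < 8 * ε := by positivity
    have hid : m ^ 2 / (8 * ε) + 8 * ε * ‖b t₀‖ ^ 2 - 2 * m * ‖b t₀‖ =
        (m - 8 * ε * ‖b t₀‖) ^ 2 / (8 * ε) := by
      field_simp; ring
    nlinarith [div_nonneg (sq_nonneg (m - 8 * ε * ‖b t₀‖)) h8.le]
  -- final assembly
  have hfin : (1 / (4 * ε)) * M = m ^ 2 / (8 * ε) + m ^ 2 / (8 * ε) := by
    rw [← hm2]; field_simp; ring
  rw [hibp, hfin]
  linarith [hend1, hend2, hmid, hsplit, hyoung, hyoung2]
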